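/- If P and Q are σ-bqo posets, then the product P × Q with the coordinatewise order ((p,q) ≤ (p',q') iff p ≤_P p' and q ≤_Q q') is σ-bqo; more generally, any finite product of σ-bqo posets with the coordinatewise order is σ-bqo. -/

import Mathlib

universe u v

open Set

/-- `r` is an initial segment of `X ⊆ ℕ`: `r ⊆ X` and every element of `X` not in `r`
is greater than every element of `r`. -/
def NatInitSeg (r : Finset ℕ) (X : Set ℕ) : Prop :=
  ↑r ⊆ X ∧ ∀ x ∈ X, x ∉ r → ∀ y ∈ r, y < x

/-- `B` is a barrier: an infinite inclusion-antichain of finite subsets of `ℕ` such that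
every infinite subset of the base has an initial segment in `B`. -/
def IsBarrier (B : Set (Finset ℕ)) : Prop :=
  B.Infinite ∧
  (∀ x ∈ B, ∀ y ∈ B, x ⊆ y → x = y) ∧
  (∀ X : Set ℕ, X ⊆ (⋃ b ∈ B, (↑b : Set ℕ)) → X.Infinite → ∃ r ∈ B, NatInitSeg r X)

/-- `t` is a proper initial segment of the finite set `s`. -/
def FinsetProperInitSeg (t s : Finset ℕ) : Prop :=
  t ⊆ s ∧ t ≠ s ∧ ∀ x ∈ s, x ∉ t → ∀ y ∈ t, y < x

/-- The shift-extension relation `r ◁ s`: `min r < min s` and `r \ {min r}` is a proper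
initial segment of `s`. -/
def ShiftExt (r s : Finset ℕ) : Prop :=
  ∃ m ∈ r, (∀ x ∈ r, m ≤ x) ∧ (∀ y ∈ s, m < y) ∧ FinsetProperInitSeg (r.erase m) s

/-- A map `f` from a barrier `B` into `X` is good for the relation `le`. -/
def GoodOn {X : Type*} (le : X → X → Prop) (B : Set (Finset ℕ)) (f : Finset ℕ → X) : Prop :=
  ∃ s ∈ B, ∃ t ∈ B, ShiftExt s t ∧ le (f s) (f t)

/-- Well quasi-order for a relation: every `ℕ`-sequence is good. -/
def IsWqoRel {X : Type*} (le : X → X → Prop) : Prop :=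
  ∀ p : ℕ → X, ∃ i j : ℕ, i < j ∧ le (p i) (p j)

/-- Better quasi-order: every map from every barrier is good. -/
def IsBqoRel {X : Type*} (le : X → X → Prop) : Prop :=
  ∀ B : Set (Finset ℕ), IsBarrier B → ∀ f : Finset ℕ → X, GoodOn le B f

/-- The (strict) lexicographic order on finite subsets of `ℕ`:
`r < s` iff `r ≠ s` and the least element of the symmetric difference belongs to `r`. -/
def FinsetLexLt (r s : Finset ℕ) : Prop :=
  r ≠ s ∧ ∀ m ∈ symmDiff r s, (∀ x ∈ symmDiff r s, m ≤ x) → m ∈ r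

/-- The barrier `B` has lexicographic order type `≤ α`: there is a lex-strictly-increasing
ordinal-valued function on `B` bounded by `α`. -/
def BarrierTypeLE (B : Set (Finset ℕ)) (α : Ordinal.{0}) : Prop :=
  ∃ g : Finset ℕ → Ordinal.{0}, (∀ b ∈ B, g b < α) ∧
    ∀ b₁ ∈ B, ∀ b₂ ∈ B, FinsetLexLt b₁ b₂ → g b₁ < g b₂

/-- `α`-wqo: every map from a barrier of order type `≤ α` is good. -/
def IsAlphaWqoRel {X : Type*} (le : X → X → Prop) (α : Ordinal.{0}) : Prop :=
  ∀ B : Set (Finset ℕ), IsBarrier B → BarrierTypeLE B α →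
    ∀ f : Finset ℕ → X, GoodOn le B f

/-- `σ`-bqo: a wqo which is a countable union of sets, each bqo in the induced order. -/
def IsSigmaBqoRel {X : Type*} (le : X → X → Prop) : Prop :=
  IsWqoRel le ∧
  ∃ S : ℕ → Set X, (⋃ n, S n) = Set.univ ∧
    ∀ n, IsBqoRel (fun x y : S n => le x.1 y.1)

/-- Sequences of length `α` from `P`. -/
abbrev OrdSeq (P : Type u) (α : Ordinal.{0}) := {β : Ordinal.{0} // β < α} → P

/-- The embeddability quasi-order on `P^α`. -/
def OrdSeqLE {P : Type u} [Preorder P] {α : Ordinal.{0}} (f g : OrdSeq P α) : Prop :=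
  ∃ ρ : {β : Ordinal.{0} // β < α} → {β : Ordinal.{0} // β < α},
    StrictMono ρ ∧ ∀ γ, f γ ≤ g (ρ γ)

/-- Sequences of length `< α` from `P`. -/
abbrev OrdSeqLt (P : Type u) (α : Ordinal.{0}) :=
  Σ β : {β : Ordinal.{0} // β < α}, ({γ : Ordinal.{0} // γ < β.1} → P)

/-- The embeddability quasi-order on `P^{<α}`. -/
def OrdSeqLtLE {P : Type u} [Preorder P] {α : Ordinal.{0}} (f g : OrdSeqLt P α) : Prop :=
  ∃ ρ : {γ : Ordinal.{0} // γ < f.1.1} → {γ : Ordinal.{0} // γ < g.1.1},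
    StrictMono ρ ∧ ∀ δ, f.2 δ ≤ g.2 (ρ δ)

/-- The Dress–Schiffels relation: `f ≤DS g` iff `f i < g i` for every `i` maximal in
`Δ(f,g) = {j | f j ≠ g j}`. -/
def DSle {I : Type u} [PartialOrder I] {P : I → Type v} [∀ i, PartialOrder (P i)]
    (f g : ∀ i, P i) : Prop :=
  ∀ i : I, Maximal (fun j => f j ≠ g j) i → f i < g i

/-- The underlying set of the Dress–Schiffels product: finitely supported functions. -/
abbrev DSProd (I : Type u) [PartialOrder I] (P : I → Type v) [∀ i, PartialOrder (P i)]
    [∀ i, OrderBot (P i)] :=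
  {f : ∀ i, P i // {i | f i ≠ ⊥}.Finite}

namespace SBqo

open Set

def base (B : Set (Finset ℕ)) : Set ℕ := ⋃ b ∈ B, (↑b : Set ℕ)

lemma subset_base {B : Set (Finset ℕ)} {b : Finset ℕ} (hb : b ∈ B) : ↑b ⊆ base B :=
  fun _ hx => Set.mem_biUnion hb hx

lemma initSeg_comparable {r b : Finset ℕ} {X : Set ℕ} (hr : NatInitSeg r X)
    (hb : NatInitSeg b X) : r ⊆ b ∨ b ⊆ r := by
  by_contra h
  push_neg at h
  obtain ⟨h1, h2⟩ := h
  obtain ⟨x, hxr, hxb⟩ := Finset.not_subset.1 h1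
  obtain ⟨y, hyb, hyr⟩ := Finset.not_subset.1 h2
  have hxy : y < x := hb.2 x (hr.1 hxr) hxb y hyb
  have hyx : x < y := hr.2 y (hb.1 hyb) hyr x hxr
  omega

lemma initSeg_unique {B : Set (Finset ℕ)} (hB : IsBarrier B) {r b : Finset ℕ} {X : Set ℕ}
    (hrB : r ∈ B) (hbB : b ∈ B) (hr : NatInitSeg r X) (hb : NatInitSeg b X) : r = b := by
  rcases initSeg_comparable hr hb with h | h
  · exact hB.2.1 r hrB b hbB h
  · exact (hB.2.1 b hbB r hrB h).symm

lemma empty_not_mem {B : Set (Finset ℕ)} (hB : IsBarrier B) : ∅ ∉ B := by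
  intro h
  have hsub : B ⊆ {∅} := fun b hb =>
    Set.mem_singleton_iff.2 (hB.2.1 ∅ h b hb (Finset.empty_subset b)).symm
  exact hB.1 ((Set.finite_singleton ∅).subset hsub)

lemma exists_initSeg {B : Set (Finset ℕ)} (hB : IsBarrier B) {X : Set ℕ}
    (hX : X ⊆ base B) (hinf : X.Infinite) :
    ∃ r ∈ B, NatInitSeg r X ∧ r.Nonempty := by
  obtain ⟨r, hrB, hr⟩ := hB.2.2 X hX hinf
  refine ⟨r, hrB, hr, Finset.nonempty_iff_ne_empty.2 ?_⟩
  rintro rfl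
  exact empty_not_mem hB hrB

lemma tail_infinite {X : Set ℕ} (hX : X.Infinite) (n : ℕ) : (X ∩ Set.Ioi n).Infinite := by
  have h : X \ Set.Iic n ⊆ X ∩ Set.Ioi n := fun x hx => ⟨hx.1, by simpa using hx.2⟩
  exact (hX.diff (Set.finite_Iic n)).mono h

lemma base_infinite {B : Set (Finset ℕ)} (hB : IsBarrier B) : (base B).Infinite := by
  by_contra h
  rw [Set.not_infinite] at h
  have hsub : B ⊆ ↑(h.toFinset.powerset) := by
    intro b hb
    simp only [Finset.coe_powerset, Set.mem_preimage, Set.mem_powerset_iff]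
    intro x hx
    exact by simpa using h.mem_toFinset.2 (subset_base hb hx)
  exact hB.1 ((h.toFinset.powerset).finite_toSet.subset hsub)

lemma infinite_of_high {C : Set (Finset ℕ)} (h : ∀ n : ℕ, ∃ b ∈ C, ∃ x ∈ b, n < x) :
    C.Infinite := by
  by_contra hfin
  rw [Set.not_infinite] at hfin
  classical
  obtain ⟨b, hb, x, hxb, hx⟩ := h (hfin.toFinset.sup (fun b => b.sup id))
  have h1 : x ≤ b.sup id := Finset.le_sup (f := id) hxb
  have h2 : b.sup id ≤ hfin.toFinset.sup (fun b => b.sup id) :=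
    Finset.le_sup (hfin.mem_toFinset.2 hb)
  omega

def Restr (B : Set (Finset ℕ)) (M : Set ℕ) : Set (Finset ℕ) := {b ∈ B | ↑b ⊆ M}

lemma restr_barrier {B : Set (Finset ℕ)} {M : Set ℕ} (hB : IsBarrier B)
    (hM : M ⊆ base B) (hMinf : M.Infinite) : IsBarrier (Restr B M) := by
  have hbase : base (Restr B M) ⊆ M := by
    intro x hx
    simp only [base, Set.mem_iUnion] at hx
    obtain ⟨b, hb, hxb⟩ := hx
    exact hb.2 hxb
  refine ⟨?_, fun x hx y hy hxy => hB.2.1 x hx.1 y hy.1 hxy, ?_⟩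
  · apply infinite_of_high
    intro n
    obtain ⟨r, hrB, hr, hrne⟩ := exists_initSeg hB (X := M ∩ Set.Ioi n)
      (fun x hx => hM hx.1) (tail_infinite hMinf n)
    obtain ⟨x, hx⟩ := hrne
    exact ⟨r, ⟨hrB, fun z hz => (hr.1 hz).1⟩, x, hx, (hr.1 hx).2⟩
  · intro X hXb hXinf
    have hXM : X ⊆ M := hXb.trans hbase
    obtain ⟨r, hrB, hr⟩ := hB.2.2 X (hXM.trans hM) hXinf
    exact ⟨r, ⟨hrB, fun z hz => hXM (hr.1 hz)⟩, hr⟩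

lemma exists_shiftExt {B : Set (Finset ℕ)} (hB : IsBarrier B) {s : Finset ℕ} (hs : s ∈ B) :
    ∃ t ∈ B, ShiftExt s t := by
  classical
  have hsne : s.Nonempty := Finset.nonempty_iff_ne_empty.2 (fun h => empty_not_mem hB (h ▸ hs))
  obtain ⟨m, hm, hmin⟩ := s.exists_min_image id hsne
  set K := s.sup id with hK
  set X : Set ℕ := ↑(s.erase m) ∪ (base B ∩ Set.Ioi K) with hX
  have hXsub : X ⊆ base B := by
    rintro x (hx | hx)
    · exact subset_base hs (Finset.mem_of_mem_erase hx)
    · exact hx.1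
  have hXinf : X.Infinite :=
    ((tail_infinite (base_infinite hB) K).mono Set.subset_union_right)
  obtain ⟨r, hrB, hr, hrne⟩ := exists_initSeg hB hXsub hXinf
  have herase : s.erase m ⊆ r := by
    intro y hy
    by_contra hyr
    have hall : ∀ z ∈ r, z < y := hr.2 y (Or.inl (Finset.mem_coe.2 hy)) hyr
    have hrsub : r ⊆ s.erase m := by
      intro z hz
      rcases hr.1 hz with h | h
      · exact Finset.mem_coe.1 h
      · have h1 : K < z := h.2
        have h2 : y ≤ K := Finset.le_sup (f := id) (Finset.mem_of_mem_erase hy)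
        have h3 := hall z hz
        omega
    have hrs : r = s := hB.2.1 r hrB s hs (hrsub.trans (Finset.erase_subset m s))
    subst hrs
    rcases hr.1 (Finset.mem_coe.2 hm) with h | h
    · exact (Finset.notMem_erase m r) (Finset.mem_coe.1 h)
    · have : m ≤ K := Finset.le_sup (f := id) hm
      have := h.2
      simp only [Set.mem_Ioi] at this
      omega
  have hne : s.erase m ≠ r := by
    intro he
    have hrs : r = s := hB.2.1 r hrB s hs (he ▸ Finset.erase_subset m s)
    have heq : s.erase m = s := he.trans hrs
    exact (Finset.notMem_erase m s) (heq.symm ▸ hm)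
  refine ⟨r, hrB, m, hm, hmin, ?_, herase, hne, ?_⟩
  · intro y hy
    rcases hr.1 hy with h | h
    · have h' := Finset.mem_erase.1 (Finset.mem_coe.1 h)
      exact lt_of_le_of_ne (hmin y h'.2) (Ne.symm h'.1)
    · have : m ≤ K := Finset.le_sup (f := id) hm
      have h2 := h.2
      simp only [Set.mem_Ioi] at h2
      omega
  · intro x hx hxe y hy
    rcases hr.1 hx with h | h
    · exact absurd (Finset.mem_coe.1 h) hxe
    · have h1 : y ≤ K := Finset.le_sup (f := id) (Finset.mem_of_mem_erase hy)
      have h2 := h.2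
      simp only [Set.mem_Ioi] at h2
      omega

end SBqo
namespace SBqo

def Tail (M : Set ℕ) (s : Finset ℕ) : Set ℕ := {x ∈ M | ∀ y ∈ s, y < x}

lemma tail_subset (M : Set ℕ) (s : Finset ℕ) : Tail M s ⊆ M := fun _ hx => hx.1

lemma tail_mono {M N : Set ℕ} (s : Finset ℕ) (h : N ⊆ M) : Tail N s ⊆ Tail M s :=
  fun _ hx => ⟨h hx.1, hx.2⟩

lemma tail_anti {M : Set ℕ} {s t : Finset ℕ} (h : s ⊆ t) : Tail M t ⊆ Tail M s :=
  fun _ hx => ⟨hx.1, fun y hy => hx.2 y (h hy)⟩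

lemma tail_empty (M : Set ℕ) : Tail M ∅ = M := by
  ext x; simp [Tail]

lemma tail_infinite' {M : Set ℕ} (hM : M.Infinite) (s : Finset ℕ) : (Tail M s).Infinite := by
  refine (tail_infinite hM (s.sup id)).mono ?_
  intro x hx
  exact ⟨hx.1, fun y hy => lt_of_le_of_lt (Finset.le_sup (f := id) hy) hx.2⟩

section Partition

variable (B : Set (Finset ℕ)) (c : Finset ℕ → Bool)

def Accepts (s : Finset ℕ) (M : Set ℕ) : Prop :=
  ∀ X : Set ℕ, X ⊆ M → X.Infinite →
    ∃ r : Finset ℕ, NatInitSeg r X ∧ (s ∪ r) ∈ B ∧ c (s ∪ r) = true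

def Rejects (s : Finset ℕ) (M : Set ℕ) : Prop :=
  ∀ N : Set ℕ, N ⊆ M → N.Infinite → ¬ Accepts B c s N

variable {B c}

lemma accepts_mono {s : Finset ℕ} {M N : Set ℕ} (h : Accepts B c s M) (hNM : N ⊆ M) :
    Accepts B c s N := fun X hX hXi => h X (hX.trans hNM) hXi

lemma rejects_mono {s : Finset ℕ} {M N : Set ℕ} (h : Rejects B c s M) (hNM : N ⊆ M) :
    Rejects B c s N := fun X hX hXi => h X (hX.trans hNM) hXi

lemma exists_decided (s : Finset ℕ) {M : Set ℕ} (hM : M.Infinite) :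
    ∃ N, N ⊆ M ∧ N.Infinite ∧ (Accepts B c s N ∨ Rejects B c s N) := by
  by_cases h : Rejects B c s M
  · exact ⟨M, subset_rfl, hM, Or.inr h⟩
  · simp only [Rejects, not_forall] at h
    obtain ⟨N, hNM, hNi, hacc⟩ := h
    exact ⟨N, hNM, hNi, Or.inl (not_not.1 hacc)⟩

lemma exists_decided_finset (L : Finset (Finset ℕ)) {M : Set ℕ} (hM : M.Infinite) :
    ∃ N, N ⊆ M ∧ N.Infinite ∧ ∀ s ∈ L, Accepts B c s N ∨ Rejects B c s N := by
  classical
  induction L using Finset.induction with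
  | empty => exact ⟨M, subset_rfl, hM, by simp⟩
  | @insert a L _ ih =>
    obtain ⟨N, hNM, hNi, hN⟩ := ih
    obtain ⟨N', hN'N, hN'i, hdec⟩ := exists_decided (B := B) (c := c) a hNi
    refine ⟨N', hN'N.trans hNM, hN'i, ?_⟩
    intro s hs
    rcases Finset.mem_insert.1 hs with rfl | hs
    · exact hdec
    · rcases hN s hs with h | h
      · exact Or.inl (accepts_mono h hN'N)
      · exact Or.inr (rejects_mono h hN'N)

variable (B c) in
open Classical in
noncomputable def stepP (p : Set ℕ × Finset ℕ) : Set ℕ × Finset ℕ :=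
  if h : p.1.Infinite then
    ((exists_decided_finset (B := B) (c := c) ((insert (sInf p.1) p.2).powerset)
        (tail_infinite h (sInf p.1))).choose, insert (sInf p.1) p.2)
  else p

variable (B c) in
noncomputable def fuse (M0 : Set ℕ) (k : ℕ) : Set ℕ × Finset ℕ :=
  (stepP B c)^[k] (M0, ∅)

lemma stepP_spec {p : Set ℕ × Finset ℕ} (h : p.1.Infinite) :
    (stepP B c p).1 ⊆ p.1 ∩ Set.Ioi (sInf p.1) ∧ (stepP B c p).1.Infinite ∧
    (stepP B c p).2 = insert (sInf p.1) p.2 ∧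
    ∀ s ∈ (insert (sInf p.1) p.2).powerset,
      Accepts B c s (stepP B c p).1 ∨ Rejects B c s (stepP B c p).1 := by
  have spec := (exists_decided_finset (B := B) (c := c)
    ((insert (sInf p.1) p.2).powerset) (tail_infinite h (sInf p.1))).choose_spec
  rw [stepP, dif_pos h]
  exact ⟨spec.1, spec.2.1, rfl, spec.2.2⟩

lemma fuse_zero (M0 : Set ℕ) : fuse B c M0 0 = (M0, ∅) := rfl

lemma fuse_succ (M0 : Set ℕ) (k : ℕ) :
    fuse B c M0 (k + 1) = stepP B c (fuse B c M0 k) := by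
  simp [fuse, Function.iterate_succ_apply']

lemma fusion {B : Set (Finset ℕ)} (hB : IsBarrier B) (c : Finset ℕ → Bool) :
    ∃ M : Set ℕ, M ⊆ base B ∧ M.Infinite ∧
      ∀ s : Finset ℕ, ↑s ⊆ M →
        (Accepts B c s (Tail M s) ∨ Rejects B c s (Tail M s)) := by
  classical
  obtain ⟨M0, hM0b, hM0i, hM0d⟩ := exists_decided (B := B) (c := c) ∅ (base_infinite hB)
  set u : ℕ → Set ℕ × Finset ℕ := fuse B c M0 with hu
  set a : ℕ → ℕ := fun k => sInf (u k).1 with ha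
  -- basic invariant: infinite, plus step structure
  have hinf : ∀ k, (u k).1.Infinite := by
    intro k
    induction k with
    | zero => rw [hu, fuse_zero]; exact hM0i
    | succ k ih =>
      rw [hu, fuse_succ]
      exact (stepP_spec ih).2.1
  have hstep : ∀ k, (u (k+1)).1 ⊆ (u k).1 ∩ Set.Ioi (a k) ∧
      (u (k+1)).2 = insert (a k) (u k).2 ∧
      (∀ s ∈ (insert (a k) (u k).2).powerset,
        Accepts B c s (u (k+1)).1 ∨ Rejects B c s (u (k+1)).1) := by
    intro k
    have h := hinf k
    have spec := stepP_spec (B := B) (c := c) h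
    rw [hu, fuse_succ]
    exact ⟨spec.1, spec.2.2.1, spec.2.2.2⟩
  have hmem : ∀ k, a k ∈ (u k).1 := fun k => Nat.sInf_mem (hinf k).nonempty
  have hdecr : ∀ k, (u (k+1)).1 ⊆ (u k).1 := fun k => (hstep k).1.trans Set.inter_subset_left
  have hchain : ∀ j k, j ≤ k → (u k).1 ⊆ (u j).1 := by
    intro j k hjk
    induction k with
    | zero => cases Nat.le_zero.1 hjk; exact subset_rfl
    | succ k ih =>
      rcases Nat.lt_or_ge j (k+1) with h | h
      · exact (hdecr k).trans (ih (Nat.lt_succ_iff.1 h))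
      · have : j = k + 1 := le_antisymm hjk h
        subst this; exact subset_rfl
  have hamono : StrictMono a := by
    apply strictMono_nat_of_lt_succ
    intro k
    have := (hstep k).1 (hmem (k+1))
    exact this.2
  have hu0 : (u 0).1 = M0 := by rw [hu, fuse_zero]
  have hsubM0 : ∀ k, (u k).1 ⊆ M0 := fun k => hu0 ▸ hchain 0 k (Nat.zero_le k)
  have hF : ∀ k, (u k).2 = (Finset.range k).image a := by
    intro k
    induction k with
    | zero => rw [hu, fuse_zero]; simp
    | succ k ih =>
      rw [(hstep k).2.1, ih, Finset.range_add_one, Finset.image_insert]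
  set M : Set ℕ := Set.range a with hM
  have hMsub : M ⊆ base B := by
    rintro x ⟨k, rfl⟩
    exact hM0b (hsubM0 k (hmem k))
  refine ⟨M, hMsub, Set.infinite_range_of_injective hamono.injective, ?_⟩
  intro s hsM
  rcases s.eq_empty_or_nonempty with rfl | hsne
  · rw [tail_empty]
    rcases hM0d with h | h
    · exact Or.inl (accepts_mono h (fun x hx => by
        obtain ⟨k, rfl⟩ := hx; exact hsubM0 k (hmem k)))
    · exact Or.inr (rejects_mono h (fun x hx => by
        obtain ⟨k, rfl⟩ := hx; exact hsubM0 k (hmem k)))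
  · obtain ⟨k, hk⟩ := hsM (Finset.mem_coe.2 (s.max'_mem hsne))
    -- s ⊆ insert (a k) (u k).2
    have hssub : s ∈ (insert (a k) (u k).2).powerset := by
      rw [Finset.mem_powerset]
      intro y hy
      obtain ⟨j, hj⟩ := hsM (Finset.mem_coe.2 hy)
      have hyle : y ≤ a k := hk ▸ s.le_max' y hy
      have hjk : j ≤ k := by
        by_contra hc
        have := hamono (Nat.lt_of_not_le hc)
        omega
      rcases Nat.lt_or_ge j k with h | h
      · refine Finset.mem_insert_of_mem ?_
        rw [hF k]
        exact Finset.mem_image.2 ⟨j, Finset.mem_range.2 h, hj⟩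
      · have : j = k := le_antisymm hjk h
        subst this
        rw [hj]
        exact Finset.mem_insert_self _ _
    have htsub : Tail M s ⊆ (u (k+1)).1 := by
      rintro x ⟨⟨j, rfl⟩, hx2⟩
      have : a k < a j := hx2 (a k) (hk ▸ s.max'_mem hsne)
      have hjk : k < j := by
        by_contra hc
        have : a j ≤ a k := hamono.le_iff_le.2 (Nat.le_of_not_lt hc)
        omega
      exact hchain (k+1) j hjk (hmem j)
    rcases (hstep k).2.2 s hssub with h | h
    · exact Or.inl (accepts_mono h htsub)
    · exact Or.inr (rejects_mono h htsub)

end Partition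

end SBqo
namespace SBqo

lemma reject_step {B : Set (Finset ℕ)} {c : Finset ℕ → Bool} {M : Set ℕ}
    {s : Finset ℕ} (hrej : Rejects B c s (Tail M s)) :
    {n | n ∈ Tail M s ∧ Accepts B c (insert n s) (Tail M (insert n s))}.Finite := by
  by_contra hinf
  have hinf' : {n | n ∈ Tail M s ∧
      Accepts B c (insert n s) (Tail M (insert n s))}.Infinite := hinf
  refine hrej _ (fun n hn => hn.1) hinf' ?_
  intro X hX hXi
  have hXne := hXi.nonempty
  set n := sInf X with hn
  have hnX : n ∈ X := Nat.sInf_mem hXne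
  have hnN := hX hnX
  have hXd : (X \ {n}) ⊆ Tail M (insert n s) := by
    rintro x ⟨hx, hxn⟩
    have hxN := hX hx
    refine ⟨hxN.1.1, ?_⟩
    intro y hy
    rcases Finset.mem_insert.1 hy with rfl | hy
    · exact lt_of_le_of_ne (Nat.sInf_le hx) (Ne.symm (by simpa using hxn))
    · exact hxN.1.2 y hy
  obtain ⟨r, hr, hrB, hrc⟩ := hnN.2 (X \ {n}) hXd (hXi.diff (Set.finite_singleton n))
  have hkey : s ∪ insert n r = insert n s ∪ r := by
    ext z
    simp only [Finset.mem_union, Finset.mem_insert]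
    tauto
  refine ⟨insert n r, ⟨?_, ?_⟩, ?_, ?_⟩
  · intro x hx
    rcases Finset.mem_insert.1 (Finset.mem_coe.1 hx) with rfl | hx'
    · exact hnX
    · exact (hr.1 (Finset.mem_coe.2 hx')).1
  · intro x hxX hxr y hy
    have hxn : x ≠ n := fun h => hxr (h ▸ Finset.mem_insert_self n r)
    have hxr' : x ∉ r := fun h => hxr (Finset.mem_insert_of_mem h)
    have hxX' : x ∈ X \ {n} := ⟨hxX, by simpa using hxn⟩
    rcases Finset.mem_insert.1 hy with rfl | hy'
    · exact lt_of_le_of_ne (Nat.sInf_le hxX) (Ne.symm hxn)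
    · exact hr.2 x hxX' hxr' y hy'
  · rw [hkey]; exact hrB
  · rw [hkey]; exact hrc

theorem partition {B : Set (Finset ℕ)} (hB : IsBarrier B) (c : Finset ℕ → Bool) :
    ∃ M : Set ℕ, M ⊆ base B ∧ M.Infinite ∧ ∃ v : Bool, ∀ b ∈ B, ↑b ⊆ M → c b = v := by
  classical
  obtain ⟨M, hMb, hMi, hdec⟩ := fusion hB c
  rcases hdec ∅ (by simp) with hacc | hrej
  · -- accepted: color true on B | M
    rw [tail_empty] at hacc
    refine ⟨M, hMb, hMi, true, ?_⟩
    intro b hbB hbM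
    set X : Set ℕ := ↑b ∪ (M ∩ Set.Ioi (b.sup id)) with hX
    have hXi : X.Infinite := (tail_infinite hMi _).mono Set.subset_union_right
    have hXM : X ⊆ M := by
      rintro x (hx | hx)
      · exact hbM hx
      · exact hx.1
    obtain ⟨r, hr, hrB, hrc⟩ := hacc X hXM hXi
    rw [Finset.empty_union] at hrB hrc
    have hbX : NatInitSeg b X := by
      refine ⟨Set.subset_union_left, ?_⟩
      intro x hx hxb y hy
      rcases hx with hx | hx
      · exact absurd (Finset.mem_coe.1 hx) hxb
      · have h1 : y ≤ b.sup id := Finset.le_sup (f := id) hy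
        have h2 := hx.2
        simp only [Set.mem_Ioi] at h2
        omega
    have := initSeg_unique hB hrB hbB hr hbX
    rwa [← this]
  · -- rejected: build a set on which the color is false
    set Bad : Finset ℕ → Set ℕ :=
      fun s => {n | n ∈ Tail M s ∧ Accepts B c (insert n s) (Tail M (insert n s))} with hBad
    set pick : Finset ℕ → ℕ :=
      fun F => sInf (Tail M F \ ⋃ s ∈ F.powerset, Bad s) with hpick
    set F : ℕ → Finset ℕ := fun k => Nat.rec ∅ (fun _ Fk => insert (pick Fk) Fk) k with hF
    have hFsucc : ∀ k, F (k+1) = insert (pick (F k)) (F k) := fun k => rfl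
    have hpick_spec : ∀ G : Finset ℕ, (∀ s ⊆ G, Rejects B c s (Tail M s)) →
        pick G ∈ Tail M G \ ⋃ s ∈ G.powerset, Bad s := by
      intro G h2
      apply Nat.sInf_mem
      apply Set.Infinite.nonempty
      apply Set.Infinite.diff (tail_infinite' hMi G)
      apply Set.Finite.biUnion (G.powerset).finite_toSet
      intro s hs
      exact reject_step (h2 s (Finset.mem_powerset.1 (Finset.mem_coe.1 hs)))
    have hInv : ∀ k, ↑(F k) ⊆ M ∧ ∀ s ⊆ F k, Rejects B c s (Tail M s) := by
      intro k
      induction k with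
      | zero =>
        refine ⟨by simp [hF], ?_⟩
        intro s hsub
        have : s = ∅ := Finset.subset_empty.1 hsub
        subst this
        exact hrej
      | succ k ih =>
        have hp := hpick_spec (F k) ih.2
        rw [hFsucc]
        constructor
        · intro x hx
          rcases Finset.mem_insert.1 (Finset.mem_coe.1 hx) with rfl | hx'
          · exact hp.1.1
          · exact ih.1 (Finset.mem_coe.2 hx')
        · intro s hsub
          by_cases hns : pick (F k) ∈ s
          · set s0 := s.erase (pick (F k)) with hs0
            have hs0sub : s0 ⊆ F k := by
              intro y hy
              have h1 := Finset.mem_erase.1 hy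
              rcases Finset.mem_insert.1 (hsub h1.2) with h | h
              · exact absurd h h1.1
              · exact h
            have hnb : pick (F k) ∉ Bad s0 := by
              intro hc
              exact hp.2 (Set.mem_biUnion (Finset.mem_coe.2 (Finset.mem_powerset.2 hs0sub)) hc)
            have hmem : pick (F k) ∈ Tail M s0 :=
              tail_anti hs0sub hp.1
            have hnacc : ¬ Accepts B c (insert (pick (F k)) s0) (Tail M (insert (pick (F k)) s0)) := by
              intro hc
              exact hnb ⟨hmem, hc⟩
            have hse : insert (pick (F k)) s0 = s := Finset.insert_erase hns
            rw [← hse]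
            have hsubM : ↑(insert (pick (F k)) s0) ⊆ M := by
              intro x hx
              rcases Finset.mem_insert.1 (Finset.mem_coe.1 hx) with rfl | hx'
              · exact hp.1.1
              · exact ih.1 (Finset.mem_coe.2 (hs0sub hx'))
            rcases hdec (insert (pick (F k)) s0) hsubM with h | h
            · exact absurd h hnacc
            · exact h
          · apply ih.2
            intro y hy
            rcases Finset.mem_insert.1 (hsub hy) with rfl | h
            · exact absurd hy hns
            · exact h
    set x : ℕ → ℕ := fun k => pick (F k) with hx
    have hxF : ∀ k, x k ∈ Tail M (F k) := fun k => (hpick_spec (F k) (hInv k).2).1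
    have hFim : ∀ k, F k = (Finset.range k).image x := by
      intro k
      induction k with
      | zero => simp [hF]
      | succ k ih => rw [hFsucc, ih, Finset.range_add_one, Finset.image_insert, ← ih]
    have hxmono : StrictMono x := by
      apply strictMono_nat_of_lt_succ
      intro k
      have h1 := hxF (k+1)
      exact h1.2 (x k) (by rw [hFsucc]; exact Finset.mem_insert_self _ _)
    have hxM : ∀ k, x k ∈ M := fun k => (hxF k).1
    refine ⟨Set.range x, fun z hz => by obtain ⟨k, rfl⟩ := hz; exact hMb (hxM k),
      Set.infinite_range_of_injective hxmono.injective, false, ?_⟩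
    intro b hbB hbX
    -- b ⊆ F k for some k
    have hmono : ∀ i l, i ≤ l → F i ⊆ F l := by
      intro i l hil
      induction l with
      | zero => cases Nat.le_zero.1 hil; exact subset_rfl
      | succ l ihl =>
        rcases Nat.lt_or_ge i (l+1) with h | h
        · exact (ihl (Nat.lt_succ_iff.1 h)).trans (by rw [hFsucc]; exact Finset.subset_insert _ _)
        · have : i = l + 1 := le_antisymm hil h
          subst this; exact subset_rfl
    have hbF : ∀ b : Finset ℕ, ↑b ⊆ Set.range x → ∃ k, b ⊆ F k := by
      classical
      intro b
      induction b using Finset.induction with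
      | empty => exact fun _ => ⟨0, by simp⟩
      | @insert a b _ ih =>
        intro hbX
        have hsubr : ↑b ⊆ Set.range x := fun z hz => hbX (by
          exact Finset.mem_coe.2 (Finset.mem_insert_of_mem (Finset.mem_coe.1 hz)))
        obtain ⟨k, hk⟩ := ih hsubr
        obtain ⟨j, hj⟩ := hbX (Finset.mem_coe.2 (Finset.mem_insert_self a b))
        refine ⟨max (j+1) k, ?_⟩
        intro y hy
        rcases Finset.mem_insert.1 hy with rfl | hy'
        · have : y ∈ F (j+1) := by
            rw [hFsucc]
            rw [← hj]
            exact Finset.mem_insert_self _ _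
          exact hmono (j+1) _ (le_max_left _ _) this
        · exact hmono k _ (le_max_right _ _) (hk hy')
    obtain ⟨k, hk⟩ := hbF b hbX
    have hrejb : Rejects B c b (Tail M b) := (hInv k).2 b hk
    by_contra hcb
    have hcb' : c b = true := by
      cases hcbv : c b
      · exact absurd hcbv hcb
      · rfl
    have hacc : Accepts B c b (Tail M b) := by
      intro X hX hXi
      refine ⟨∅, ⟨by simp, by simp⟩, ?_, ?_⟩
      · rwa [Finset.union_empty]
      · rwa [Finset.union_empty]
    exact hrejb (Tail M b) subset_rfl (tail_infinite' hMi b) hacc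

end SBqo
namespace SBqo

def Sq (B : Set (Finset ℕ)) : Set (Finset ℕ) :=
  {u | ∃ s ∈ B, ∃ t ∈ B, ShiftExt s t ∧ u = s ∪ t}

lemma shiftExt_struct {s t : Finset ℕ} (h : ShiftExt s t) :
    ∃ m, m ∈ s ∧ (∀ x ∈ s, m ≤ x) ∧ (∀ y ∈ t, m < y) ∧ m ∉ t ∧
      s ∪ t = insert m t ∧ (s ∪ t).erase m = t := by
  obtain ⟨m, hm, hle, hlt, hsub, _, _⟩ := h
  have hmt : m ∉ t := fun hc => lt_irrefl m (hlt m hc)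
  have hun : s ∪ t = insert m t := by
    ext x
    simp only [Finset.mem_union, Finset.mem_insert]
    constructor
    · rintro (hx | hx)
      · by_cases hxm : x = m
        · exact Or.inl hxm
        · exact Or.inr (hsub (Finset.mem_erase.2 ⟨hxm, hx⟩))
      · exact Or.inr hx
    · rintro (rfl | hx)
      · exact Or.inl hm
      · exact Or.inr hx
  refine ⟨m, hm, hle, hlt, hmt, hun, ?_⟩
  rw [hun, Finset.erase_insert hmt]

lemma shiftExt_initSeg_left {s t : Finset ℕ} (h : ShiftExt s t) :
    NatInitSeg s ↑(s ∪ t) := by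
  obtain ⟨m, hm, hle, hlt, hsub, hne, hord⟩ := h
  refine ⟨by exact_mod_cast Finset.subset_union_left, ?_⟩
  intro x hx hxs y hy
  have hxt : x ∈ t := by
    rcases Finset.mem_union.1 (Finset.mem_coe.1 hx) with h' | h'
    · exact absurd h' hxs
    · exact h'
  have hxe : x ∉ s.erase m := fun hc => hxs (Finset.mem_of_mem_erase hc)
  by_cases hym : y = m
  · subst hym; exact hlt x hxt
  · exact hord x hxt hxe y (Finset.mem_erase.2 ⟨hym, hy⟩)

lemma sq_key {B : Set (Finset ℕ)} (hB : IsBarrier B) {s t s' t' : Finset ℕ}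
    (hsB : s ∈ B) (htB : t ∈ B) (hst : ShiftExt s t)
    (hsB' : s' ∈ B) (htB' : t' ∈ B) (hst' : ShiftExt s' t')
    (huv : ShiftExt (s ∪ t) (s' ∪ t')) : t = s' := by
  obtain ⟨m, hms, hmle, hmlt, hmt, hun, her⟩ := shiftExt_struct hst
  obtain ⟨Mw, hMu, hMle, hMlt, hprop⟩ := huv
  have hMm : Mw = m := by
    have h1 : Mw ≤ m := hMle m (Finset.mem_union_left t hms)
    rcases Finset.mem_union.1 hMu with h | h
    · exact le_antisymm h1 (hmle Mw h)
    · exact absurd h1 (not_le.2 (hmlt Mw h))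
  subst hMm
  rw [her] at hprop
  have htseg : NatInitSeg t ↑(s' ∪ t') := by
    refine ⟨by exact_mod_cast hprop.1, ?_⟩
    intro x hx hxt y hy
    exact hprop.2.2 x (Finset.mem_coe.1 hx) hxt y hy
  have hsseg : NatInitSeg s' ↑(s' ∪ t') := shiftExt_initSeg_left hst'
  rcases initSeg_comparable htseg hsseg with h | h
  · exact hB.2.1 t htB s' hsB' h
  · exact (hB.2.1 s' hsB' t htB h).symm

lemma sq_antichain {B : Set (Finset ℕ)} (hB : IsBarrier B) :
    ∀ u ∈ Sq B, ∀ v ∈ Sq B, u ⊆ v → u = v := by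
  rintro u ⟨s, hsB, t, htB, hst, rfl⟩ v ⟨s', hsB', t', htB', hst', rfl⟩ huv
  obtain ⟨a, has, hale, halt, hat, hun, _⟩ := shiftExt_struct hst
  obtain ⟨a', has', hale', halt', hat', hun', _⟩ := shiftExt_struct hst'
  rw [hun, hun'] at huv ⊢
  have haa : a = a' := by
    rcases Finset.mem_insert.1 (huv (Finset.mem_insert_self a t)) with h | h
    · exact h
    · -- a ∈ t' : derive contradiction
      exfalso
      have htt : t ⊆ t' := by
        intro z hz
        rcases Finset.mem_insert.1 (huv (Finset.mem_insert_of_mem hz)) with h' | h'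
        · -- z = a' : but a' < a < z
          exfalso
          have h1 : a' < a := halt' a h
          have h2 : a < z := halt z hz
          omega
        · exact h'
      have := hB.2.1 t htB t' htB' htt
      subst this
      exact lt_irrefl a (halt a h)
  subst haa
  have htt : t ⊆ t' := by
    intro z hz
    rcases Finset.mem_insert.1 (huv (Finset.mem_insert_of_mem hz)) with h' | h'
    · exact absurd (h' ▸ hz) hat
    · exact h'
  rw [hB.2.1 t htB t' htB' htt]

lemma base_sq_subset {B : Set (Finset ℕ)} : base (Sq B) ⊆ base B := by
  intro x hx
  simp only [base, Set.mem_iUnion] at hx ⊢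
  obtain ⟨u, ⟨s, hsB, t, htB, _, rfl⟩, hxu⟩ := hx
  rcases Finset.mem_union.1 (Finset.mem_coe.1 hxu) with h | h
  · exact ⟨s, hsB, Finset.mem_coe.2 h⟩
  · exact ⟨t, htB, Finset.mem_coe.2 h⟩

lemma sq_initSeg {B : Set (Finset ℕ)} (hB : IsBarrier B) {X : Set ℕ}
    (hX : X ⊆ base B) (hXi : X.Infinite) :
    ∃ u ∈ Sq B, NatInitSeg u X ∧ u.Nonempty := by
  obtain ⟨s, hsB, hs, hsne⟩ := exists_initSeg hB hX hXi
  set m := sInf X with hm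
  have hmX : m ∈ X := Nat.sInf_mem hXi.nonempty
  have hms : m ∈ s := by
    by_contra hms
    obtain ⟨y, hy⟩ := hsne
    have h1 : y < m := hs.2 m hmX hms y hy
    have h2 : m ≤ y := Nat.sInf_le (hs.1 (Finset.mem_coe.2 hy))
    omega
  have hX'sub : X \ {m} ⊆ base B := Set.diff_subset.trans hX
  have hX'i : (X \ {m}).Infinite := hXi.diff (Set.finite_singleton m)
  obtain ⟨t, htB, ht, htne⟩ := exists_initSeg hB hX'sub hX'i
  have hmt : m ∉ t := fun hc => (ht.1 (Finset.mem_coe.2 hc)).2 rfl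
  have hes : NatInitSeg (s.erase m) (X \ {m}) := by
    constructor
    · intro x hx
      have h := Finset.mem_erase.1 (Finset.mem_coe.1 hx)
      exact ⟨hs.1 (Finset.mem_coe.2 h.2), by simpa using h.1⟩
    · intro x hx hxe y hy
      have hy' := Finset.mem_erase.1 hy
      by_cases hxs : x ∈ s
      · have : x = m := by
          by_contra h
          exact hxe (Finset.mem_erase.2 ⟨h, hxs⟩)
        exact absurd this (by simpa using hx.2)
      · exact hs.2 x hx.1 hxs y hy'.2
  have hts : t ⊆ s → False := by
    intro h
    have := hB.2.1 t htB s hsB h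
    subst this
    exact hmt (hms)
  have herase_sub : s.erase m ⊆ t := by
    rcases initSeg_comparable hes ht with h | h
    · exact h
    · exact absurd (h.trans (Finset.erase_subset m s)) (fun hc => hts hc)
  have hne : s.erase m ≠ t := by
    intro he
    exact hts (he ▸ Finset.erase_subset m s)
  refine ⟨s ∪ t, ⟨s, hsB, t, htB,
    ⟨m, hms, fun x hx => Nat.sInf_le (hs.1 (Finset.mem_coe.2 hx)), ?_, herase_sub, hne, ?_⟩, rfl⟩,
    ⟨?_, ?_⟩, ⟨m, Finset.mem_union_left _ hms⟩⟩
  · intro y hy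
    have h := ht.1 (Finset.mem_coe.2 hy)
    exact lt_of_le_of_ne (Nat.sInf_le h.1) (Ne.symm (by simpa using h.2))
  · intro x hx hxe y hy
    exact hes.2 x (ht.1 (Finset.mem_coe.2 hx)) hxe y hy
  · intro x hx
    rcases Finset.mem_union.1 (Finset.mem_coe.1 hx) with h | h
    · exact hs.1 (Finset.mem_coe.2 h)
    · exact (ht.1 (Finset.mem_coe.2 h)).1
  · intro x hx hxu y hy
    have hxs : x ∉ s := fun hc => hxu (Finset.mem_union_left t hc)
    have hxt : x ∉ t := fun hc => hxu (Finset.mem_union_right s hc)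
    have hxm : x ≠ m := fun hc => hxs (hc ▸ hms)
    rcases Finset.mem_union.1 hy with h | h
    · exact hs.2 x hx hxs y h
    · exact ht.2 x ⟨hx, by simpa using hxm⟩ hxt y h

lemma sq_barrier {B : Set (Finset ℕ)} (hB : IsBarrier B) : IsBarrier (Sq B) := by
  refine ⟨?_, sq_antichain hB, ?_⟩
  · apply infinite_of_high
    intro n
    obtain ⟨u, huSq, hu, hune⟩ := sq_initSeg hB (X := base B ∩ Set.Ioi n)
      Set.inter_subset_left (tail_infinite (base_infinite hB) n)
    obtain ⟨x, hx⟩ := hune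
    exact ⟨u, huSq, x, hx, (hu.1 (Finset.mem_coe.2 hx)).2⟩
  · intro X hXsub hXi
    obtain ⟨u, huSq, hu, _⟩ := sq_initSeg hB (hXsub.trans base_sq_subset) hXi
    exact ⟨u, huSq, hu⟩

end SBqo
namespace SBqo

lemma isBqoRel_reflect {A C : Type*} {ra : A → A → Prop} {rc : C → C → Prop}
    (φ : A → C) (h : ∀ x y, rc (φ x) (φ y) → ra x y) (hc : IsBqoRel rc) :
    IsBqoRel ra := by
  intro B hB f
  obtain ⟨s, hs, t, ht, hst, hle⟩ := hc B hB (φ ∘ f)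
  exact ⟨s, hs, t, ht, hst, h _ _ hle⟩

lemma isWqoRel_reflect {A C : Type*} {ra : A → A → Prop} {rc : C → C → Prop}
    (φ : A → C) (h : ∀ x y, rc (φ x) (φ y) → ra x y) (hc : IsWqoRel rc) :
    IsWqoRel ra := by
  intro p
  obtain ⟨i, j, hij, hr⟩ := hc (φ ∘ p)
  exact ⟨i, j, hij, h _ _ hr⟩

lemma isBqoRel_prod {A C : Type*} {ra : A → A → Prop} {rc : C → C → Prop}
    (ha : IsBqoRel ra) (hc : IsBqoRel rc) :
    IsBqoRel (fun p q : A × C => ra p.1 q.1 ∧ rc p.2 q.2) := by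
  intro B hB f
  classical
  have hSq := sq_barrier hB
  have hdec : ∀ u ∈ Sq B, ∃ p : Finset ℕ × Finset ℕ,
      p.1 ∈ B ∧ p.2 ∈ B ∧ ShiftExt p.1 p.2 ∧ u = p.1 ∪ p.2 := by
    rintro u ⟨s, hs, t, ht, hst, rfl⟩
    exact ⟨(s, t), hs, ht, hst, rfl⟩
  choose! dcmp hd1 hd2 hd3 hd4 using hdec
  set c : Finset ℕ → Bool :=
    fun u => if ra (f (dcmp u).1).1 (f (dcmp u).2).1 then true else false with hc'
  obtain ⟨M, hMb, hMi, v, hv⟩ := partition hSq c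
  set B' := Restr (Sq B) M with hB'def
  have hB' : IsBarrier B' := restr_barrier hSq hMb hMi
  have hkey : ∀ u ∈ B', ∀ w ∈ B', ShiftExt u w → (dcmp u).2 = (dcmp w).1 := by
    intro u hu w hw huw
    have huSq : u ∈ Sq B := hu.1
    have hwSq : w ∈ Sq B := hw.1
    have huw' : ShiftExt ((dcmp u).1 ∪ (dcmp u).2) ((dcmp w).1 ∪ (dcmp w).2) := by
      rw [← hd4 u huSq, ← hd4 w hwSq]
      exact huw
    exact sq_key hB (hd1 u huSq) (hd2 u huSq) (hd3 u huSq)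
      (hd1 w hwSq) (hd2 w hwSq) (hd3 w hwSq) huw'
  cases v with
  | false =>
    exfalso
    obtain ⟨u, hu, w, hw, huw, hle⟩ := ha B' hB' (fun u => (f (dcmp u).1).1)
    have hk := hkey u hu w hw huw
    have : c u = true := by
      rw [hc']
      simp only
      rw [if_pos (hk ▸ hle)]
    rw [hv u hu.1 hu.2] at this
    exact Bool.false_ne_true this
  | true =>
    obtain ⟨u, hu, w, hw, huw, hle⟩ := hc B' hB' (fun u => (f (dcmp u).1).2)
    have hk := hkey u hu w hw huw
    have hcu : c u = true := hv u hu.1 hu.2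
    have hra : ra (f (dcmp u).1).1 (f (dcmp u).2).1 := by
      rw [hc'] at hcu
      simp only at hcu
      by_contra h
      rw [if_neg h] at hcu
      exact Bool.false_ne_true hcu
    have huSq : u ∈ Sq B := hu.1
    exact ⟨(dcmp u).1, hd1 u huSq, (dcmp u).2, hd2 u huSq, hd3 u huSq,
      hra, hk ▸ hle⟩

lemma isWqoRel_prod {A C : Type*} (ra : A → A → Prop) (rc : C → C → Prop)
    [IsRefl A ra] [IsTrans A ra] (ha : IsWqoRel ra) (hc : IsWqoRel rc) :
    IsWqoRel (fun p q : A × C => ra p.1 q.1 ∧ rc p.2 q.2) := by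
  have ha' : Set.PartiallyWellOrderedOn (Set.univ : Set A) ra :=
    Set.partiallyWellOrderedOn_iff_exists_lt.2 fun f _ => ha f
  have hc' : Set.PartiallyWellOrderedOn (Set.univ : Set C) rc :=
    Set.partiallyWellOrderedOn_iff_exists_lt.2 fun f _ => hc f
  haveI : IsPreorder A ra := {}
  have hprod := ha'.prod hc'
  intro p
  obtain ⟨i, j, hij, h⟩ := hprod.exists_lt (f := p) (fun n => by simp)
  exact ⟨i, j, hij, h⟩

lemma isWqoRel_pi : ∀ (n : ℕ) (P : Fin n → Type u) (r : ∀ i, P i → P i → Prop),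
    (∀ i, IsRefl _ (r i)) → (∀ i, IsTrans _ (r i)) → (∀ i, IsWqoRel (r i)) →
    IsWqoRel (fun f g : ∀ i, P i => ∀ i, r i (f i) (g i)) := by
  intro n
  induction n with
  | zero => exact fun P r _ _ _ p => ⟨0, 1, by omega, fun i => i.elim0⟩
  | succ n ih =>
    intro P r hrefl htrans hwqo
    have h2 := ih (fun i => P i.succ) (fun i => r i.succ)
      (fun i => hrefl _) (fun i => htrans _) (fun i => hwqo _)
    haveI := hrefl 0
    haveI := htrans 0
    have hprod := isWqoRel_prod (r 0)
      (fun f g : ∀ i : Fin n, P i.succ => ∀ i, r i.succ (f i) (g i)) (hwqo 0) h2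
    exact isWqoRel_reflect (fun f => (f 0, fun i : Fin n => f i.succ))
      (fun x y h i => Fin.cases h.1 h.2 i) hprod

lemma isBqoRel_pi : ∀ (n : ℕ) (P : Fin n → Type u) (r : ∀ i, P i → P i → Prop),
    (∀ i, IsBqoRel (r i)) →
    IsBqoRel (fun f g : ∀ i, P i => ∀ i, r i (f i) (g i)) := by
  intro n
  induction n with
  | zero =>
    intro P r _ B hB f
    obtain ⟨s, hs⟩ := hB.1.nonempty
    obtain ⟨t, htB, hst⟩ := exists_shiftExt hB hs
    exact ⟨s, hs, t, htB, hst, fun i => i.elim0⟩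
  | succ n ih =>
    intro P r h
    exact isBqoRel_reflect (fun f => (f 0, fun i : Fin n => f i.succ))
      (fun x y hh i => Fin.cases hh.1 hh.2 i)
      (isBqoRel_prod (h 0) (ih _ _ (fun i => h _)))

end SBqo

open SBqo

theorem stmt_6 :
    (∀ (P : Type u) (Q : Type v) [PartialOrder P] [PartialOrder Q],
      IsSigmaBqoRel ((· ≤ ·) : P → P → Prop) → IsSigmaBqoRel ((· ≤ ·) : Q → Q → Prop) →
      IsSigmaBqoRel (fun a b : P × Q => a.1 ≤ b.1 ∧ a.2 ≤ b.2)) ∧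
    (∀ (n : ℕ) (P : Fin n → Type u) [∀ i, PartialOrder (P i)],
      (∀ i, IsSigmaBqoRel ((· ≤ ·) : P i → P i → Prop)) →
      IsSigmaBqoRel (fun f g : ∀ i, P i => ∀ i, f i ≤ g i)) := by
  constructor
  · intro P Q _ _ hP hQ
    obtain ⟨hPw, SP, hSPu, hSPb⟩ := hP
    obtain ⟨hQw, SQ, hSQu, hSQb⟩ := hQ
    refine ⟨isWqoRel_prod _ _ hPw hQw,
      fun k => (SP k.unpair.1) ×ˢ (SQ k.unpair.2), ?_, ?_⟩
    · apply Set.eq_univ_of_forall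
      rintro ⟨p, q⟩
      obtain ⟨n, hn⟩ := Set.mem_iUnion.1 (hSPu ▸ Set.mem_univ p : p ∈ ⋃ n, SP n)
      obtain ⟨m, hm⟩ := Set.mem_iUnion.1 (hSQu ▸ Set.mem_univ q : q ∈ ⋃ n, SQ n)
      refine Set.mem_iUnion.2 ⟨Nat.pair n m, ?_⟩
      rw [Set.mem_prod]
      constructor
      · simpa [Nat.unpair_pair] using hn
      · simpa [Nat.unpair_pair] using hm
    · intro k
      exact isBqoRel_reflect
        (fun x : ↥(SP k.unpair.1 ×ˢ SQ k.unpair.2) =>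
          ((⟨x.1.1, x.2.1⟩ : ↥(SP k.unpair.1)), (⟨x.1.2, x.2.2⟩ : ↥(SQ k.unpair.2))))
        (fun x y hh => hh) (isBqoRel_prod (hSPb k.unpair.1) (hSQb k.unpair.2))
  · intro n P _ hs
    have hw : IsWqoRel (fun f g : ∀ i, P i => ∀ i, f i ≤ g i) :=
      isWqoRel_pi n P (fun i => (· ≤ ·)) (fun i => inferInstance)
        (fun i => inferInstance) (fun i => (hs i).1)
    choose S hS1 hS2 using fun i => (hs i).2
    obtain ⟨e, he⟩ := exists_surjective_nat (Fin n → ℕ)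
    refine ⟨hw, fun k => {f | ∀ i, f i ∈ S i (e k i)}, ?_, ?_⟩
    · apply Set.eq_univ_of_forall
      intro f
      have hmem : ∀ i, ∃ m, f i ∈ S i m :=
        fun i => Set.mem_iUnion.1 ((hS1 i) ▸ Set.mem_univ (f i))
      choose m hm using hmem
      obtain ⟨k, hk⟩ := he m
      exact Set.mem_iUnion.2 ⟨k, fun i => by rw [hk]; exact hm i⟩
    · intro k
      exact isBqoRel_reflect
        (fun x : ↥{f : ∀ i, P i | ∀ i, f i ∈ S i (e k i)} =>
          fun i => (⟨x.1 i, x.2 i⟩ : ↥(S i (e k i))))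
        (fun x y hh => hh)
        (isBqoRel_pi n (fun i => ↥(S i (e k i)))
          (fun i => fun a b => a.1 ≤ b.1) (fun i => hS2 i (e k i)))
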